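/- Let n ≥ 1 and let x_1, …, x_n ∈ (0,∞). Let 𝒦 denote the set of all functions h : [0,∞) → ℝ that are convex on [0,∞) and Lebesgue integrable over [0,∞). Define the log-likelihood criterion Ψ(h) := (1/n)·∑_{i=1}^n log h(x_i) − ∫_0^∞ h(x) dx. Suppose f̂ ∈ 𝒦 satisfies f̂(x_i) > 0 for all i and Ψ(f̂) ≥ Ψ(h) for every h ∈ 𝒦 with h(x_i) > 0 for all i. Let Δ : [0,∞) → ℝ be Lebesgue integrable over [0,∞) and suppose there exists t > 0 such that f̂ + t·Δ ∈ 𝒦. Then (1/n)·∑_{i=1}^n Δ(x_i)/f̂(x_i) ≤ ∫_0^∞ Δ(x) dx. -/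

import Mathlib

open MeasureTheory Set

lemma log_one_add_lb {u : ℝ} (h : -(1/2) ≤ u) : u - 2*u^2 ≤ Real.log (1+u) := by
  have h1 : (0:ℝ) < 1 + u := by linarith
  have h2 := Real.one_sub_inv_le_log_of_pos h1
  have h3 : (1+u) * (1+u)⁻¹ = 1 := mul_inv_cancel₀ (ne_of_gt h1)
  nlinarith [sq_nonneg u, sq_nonneg (u*(1+u)⁻¹)]

/-- Proposition 2, maximum likelihood case: first-order characterization of the
MLE of a convex density on `[0,∞)`. -/
theorem mle_directional_derivative
    (n : ℕ) (hn : 1 ≤ n) (x : Fin n → ℝ) (hx : ∀ i, 0 < x i)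
    (fhat : ℝ → ℝ)
    (hfconv : ConvexOn ℝ (Ici 0) fhat) (hfint : IntegrableOn fhat (Ici 0))
    (hfpos : ∀ i, 0 < fhat (x i))
    (hopt : ∀ h : ℝ → ℝ, ConvexOn ℝ (Ici 0) h → IntegrableOn h (Ici 0) →
      (∀ i, 0 < h (x i)) →
      (n : ℝ)⁻¹ * ∑ i, Real.log (h (x i)) - ∫ y in Ici (0 : ℝ), h y ≤
        (n : ℝ)⁻¹ * ∑ i, Real.log (fhat (x i)) - ∫ y in Ici (0 : ℝ), fhat y)
    (Δ : ℝ → ℝ) (hΔint : IntegrableOn Δ (Ici 0))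
    (hdir : ∃ t : ℝ, 0 < t ∧ ConvexOn ℝ (Ici 0) (fun y => fhat y + t * Δ y) ∧
      IntegrableOn (fun y => fhat y + t * Δ y) (Ici 0)) :
    (n : ℝ)⁻¹ * ∑ i, Δ (x i) / fhat (x i) ≤ ∫ y in Ici (0 : ℝ), Δ y := by
  obtain ⟨t, ht, hconvt, hintt⟩ := hdir
  have hne : (Finset.univ : Finset (Fin n)).Nonempty := by
    simpa [Finset.univ_nonempty_iff] using Fin.pos_iff_nonempty.mp hn
  have hnpos : (0:ℝ) < n := by exact_mod_cast hn
  apply le_of_forall_pos_le_add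
  intro ε hε
  set C : ℝ := (n:ℝ)⁻¹ * ∑ i, (Δ (x i) / fhat (x i))^2 with hCdef
  have hC : 0 ≤ C := by
    apply mul_nonneg (by positivity)
    exact Finset.sum_nonneg fun i _ => sq_nonneg _
  set s₁ : ℝ := Finset.univ.inf' hne (fun i => fhat (x i) / (2 * (|Δ (x i)| + 1))) with hs₁def
  have hs₁pos : 0 < s₁ := by
    rw [hs₁def, Finset.lt_inf'_iff]
    intro i _
    have := hfpos i
    positivity
  set s : ℝ := min t (min s₁ (ε / (2*(C+1)))) with hsdef
  have hspos : 0 < s := by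
    apply lt_min ht (lt_min hs₁pos _)
    positivity
  have hst : s ≤ t := min_le_left _ _
  have hsε : 2 * s * C ≤ ε := by
    have h1 : s ≤ ε / (2*(C+1)) := le_trans (min_le_right _ _) (min_le_right _ _)
    have h2 : 0 < 2*(C+1) := by linarith
    rw [le_div_iff₀ h2] at h1
    nlinarith
  -- bound on u_i
  have hu : ∀ i, |s * (Δ (x i) / fhat (x i))| ≤ 1/2 := by
    intro i
    have hsi : s ≤ fhat (x i) / (2 * (|Δ (x i)| + 1)) :=
      le_trans (min_le_right _ _) (le_trans (min_le_left _ _)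
        (Finset.inf'_le _ (Finset.mem_univ i)))
    have hai := hfpos i
    have hd1 : (0:ℝ) < |Δ (x i)| + 1 := by positivity
    rw [abs_mul, abs_of_pos hspos, abs_div, abs_of_pos hai, ← mul_div_assoc,
      div_le_iff₀ hai]
    rw [le_div_iff₀ (by positivity : (0:ℝ) < 2 * (|Δ (x i)| + 1))] at hsi
    nlinarith [abs_nonneg (Δ (x i)), hspos.le]
  -- competitor h_s
  have hconvs : ConvexOn ℝ (Ici 0) (fun y => fhat y + s * Δ y) := by
    have h1 : 0 ≤ 1 - s/t := by
      rw [sub_nonneg, div_le_one ht]; exact hst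
    have h2 : 0 ≤ s/t := by positivity
    have := (hfconv.smul h1).add (hconvt.smul h2)
    convert this using 1
    any_goals rfl
    funext y
    simp only [Pi.add_apply, Pi.smul_apply, smul_eq_mul]
    field_simp
    ring
  have hints : IntegrableOn (fun y => fhat y + s * Δ y) (Ici 0) :=
    hfint.add (hΔint.const_mul s)
  have hposs : ∀ i, 0 < fhat (x i) + s * Δ (x i) := by
    intro i
    have h1 := hu i
    have hai := hfpos i
    have h2 : -(1/2) ≤ s * (Δ (x i) / fhat (x i)) := neg_le_of_abs_le h1
    have h3 : s * Δ (x i) = s * (Δ (x i) / fhat (x i)) * fhat (x i) := by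
      field_simp
    nlinarith
  have hkey := hopt _ hconvs hints hposs
  have hintgr : ∫ y in Ici (0:ℝ), (fhat y + s * Δ y) =
      (∫ y in Ici (0:ℝ), fhat y) + s * ∫ y in Ici (0:ℝ), Δ y := by
    rw [integral_add hfint (hΔint.const_mul s), integral_const_mul]
  rw [hintgr] at hkey
  -- pointwise log bound
  have hlog : ∀ i, s * (Δ (x i) / fhat (x i)) - 2 * (s * (Δ (x i) / fhat (x i)))^2
      ≤ Real.log (fhat (x i) + s * Δ (x i)) - Real.log (fhat (x i)) := by
    intro i
    have hai := hfpos i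
    have h2 : -(1/2) ≤ s * (Δ (x i) / fhat (x i)) := neg_le_of_abs_le (hu i)
    have h4 : fhat (x i) + s * Δ (x i) = fhat (x i) * (1 + s * (Δ (x i) / fhat (x i))) := by
      field_simp
    have h5 : (0:ℝ) < 1 + s * (Δ (x i) / fhat (x i)) := by linarith
    rw [h4, Real.log_mul (ne_of_gt hai) (ne_of_gt h5), add_sub_cancel_left]
    exact log_one_add_lb h2
  -- sum up
  have hsum : (n:ℝ)⁻¹ * ∑ i, (s * (Δ (x i) / fhat (x i)) - 2 * (s * (Δ (x i) / fhat (x i)))^2)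
      ≤ s * ∫ y in Ici (0:ℝ), Δ y := by
    calc (n:ℝ)⁻¹ * ∑ i, (s * (Δ (x i) / fhat (x i)) - 2 * (s * (Δ (x i) / fhat (x i)))^2)
        ≤ (n:ℝ)⁻¹ * ∑ i, (Real.log (fhat (x i) + s * Δ (x i)) - Real.log (fhat (x i))) := by
          apply mul_le_mul_of_nonneg_left _ (by positivity)
          exact Finset.sum_le_sum fun i _ => hlog i
      _ = (n:ℝ)⁻¹ * ∑ i, Real.log (fhat (x i) + s * Δ (x i))
          - (n:ℝ)⁻¹ * ∑ i, Real.log (fhat (x i)) := by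
          rw [Finset.sum_sub_distrib]; ring
      _ ≤ s * ∫ y in Ici (0:ℝ), Δ y := by linarith
  have hexpand : (n:ℝ)⁻¹ * ∑ i, (s * (Δ (x i) / fhat (x i)) - 2 * (s * (Δ (x i) / fhat (x i)))^2)
      = s * ((n:ℝ)⁻¹ * ∑ i, Δ (x i) / fhat (x i)) - 2 * s^2 * C := by
    rw [hCdef]
    rw [Finset.sum_sub_distrib]
    rw [← Finset.mul_sum, ← Finset.mul_sum]
    have h1 : ∑ i, (s * (Δ (x i) / fhat (x i)))^2 = s^2 * ∑ i, (Δ (x i) / fhat (x i))^2 := by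
      rw [Finset.mul_sum]; congr 1; funext i; ring
    rw [h1]
    ring
  rw [hexpand] at hsum
  have hfinal : (n:ℝ)⁻¹ * ∑ i, Δ (x i) / fhat (x i) ≤ (∫ y in Ici (0:ℝ), Δ y) + 2 * s * C := by
    have h2 : s * ((n:ℝ)⁻¹ * ∑ i, Δ (x i) / fhat (x i))
        ≤ s * ((∫ y in Ici (0:ℝ), Δ y) + 2 * s * C) := by nlinarith [hsum]
    exact le_of_mul_le_mul_left h2 hspos
  linarith
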